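/- arXiv:2108.06646 — 2 statements merged into one kernel-verified Lean document; each statement's English description precedes it below -/
import Mathlib

section
/- Every finite prefix of the infinite word 010110·t is overlap-free, and every finite prefix of the infinite word 101001101001·t is overlap-free, where t is the Thue–Morse word. -/
/-- An overlap is a word of the form xYxYx where x is a letter and Y is a
possibly empty word. -/
def IsOverlap {α : Type*} (w : List α) : Prop :=
  ∃ (x : α) (Y : List α), w = [x] ++ Y ++ [x] ++ Y ++ [x]

/-- A word contains an overlap if some factor (contiguous subword) of it is an overlap. -/
def HasOverlap {α : Type*} (w : List α) : Prop :=
  ∃ u, u <:+: w ∧ IsOverlap u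

/-- A word is overlap-free if none of its factors is an overlap. -/
def OverlapFree {α : Type*} (w : List α) : Prop := ¬ HasOverlap w

/-- The Thue–Morse word: the n-th letter (0-indexed) is the parity of the number
of 1s in the binary expansion of n. -/
def thueMorse (n : ℕ) : Fin 2 := Fin.ofNat 2 (Nat.digits 2 n).sum

/-- The finite prefix of length n of an infinite word. -/
def wordPrefix {α : Type*} (s : ℕ → α) (n : ℕ) : List α := (List.range n).map s

/-- The infinite word obtained by prepending a finite word to an infinite word. -/
def prependWord {α : Type*} (u : List α) (s : ℕ → α) : ℕ → α :=
  fun n => if h : n < u.length then u.get ⟨n, h⟩ else s (n - u.length)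

/-- Overlap at position j with period p in an infinite word. -/
def Ov (s : ℕ → Fin 2) (j p : ℕ) : Prop := 1 ≤ p ∧ ∀ i ≤ p, s (j+i) = s (j+i+p)

/-- The Thue-Morse morphism applied to an infinite word. -/
def muSeq (s : ℕ → Fin 2) : ℕ → Fin 2 := fun n => s (n/2) + Fin.ofNat 2 (n % 2)

lemma fin2_aa (x : Fin 2) : x + 1 + 1 = x := by revert x; decide

lemma fin2_ne (x : Fin 2) : ¬ x = x + 1 := by revert x; decide

lemma muSeq_even (s : ℕ → Fin 2) (k : ℕ) : muSeq s (2*k) = s k := by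
  simp [muSeq, Nat.mul_div_cancel_left, Nat.mul_mod_right]

lemma muSeq_odd (s : ℕ → Fin 2) (k : ℕ) : muSeq s (2*k+1) = s k + 1 := by
  have h1 : (2*k+1)/2 = k := by omega
  have h2 : (2*k+1) % 2 = 1 := by omega
  simp [muSeq, h1, h2]

lemma descent {s : ℕ → Fin 2} {j p : ℕ} (h : Ov (muSeq s) j p) :
    ∃ q, p = 2*q ∧ Ov s (j/2) q := by
  obtain ⟨hp, H⟩ := h
  have H' : ∀ x, j ≤ x → x ≤ j + p → muSeq s x = muSeq s (x + p) := by
    intro x h1 h2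
    have := H (x - j) (by omega)
    rw [show j + (x-j) = x by omega] at this
    exact this
  rcases Nat.even_or_odd p with ⟨q, hq⟩ | ⟨R, hR⟩
  · refine ⟨q, by omega, by omega, ?_⟩
    intro i hi
    by_cases hk : j ≤ 2*(j/2 + i)
    · have := H' (2*(j/2+i)) hk (by omega)
      rwa [show 2*(j/2+i) + p = 2*(j/2+i+q) by omega, muSeq_even, muSeq_even] at this
    · have := H' (2*(j/2+i)+1) (by omega) (by omega)
      rw [show 2*(j/2+i)+1 + p = 2*(j/2+i+q)+1 by omega, muSeq_odd, muSeq_odd] at this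
      exact add_right_cancel this
  · exfalso
    have rel1 : ∀ k, j ≤ 2*k → 2*k ≤ j + p → s k = s (k + R) + 1 := by
      intro k h1 h2
      have := H' (2*k) h1 h2
      rwa [show 2*k + p = 2*(k+R)+1 by omega, muSeq_even, muSeq_odd] at this
    have rel2 : ∀ k, j ≤ 2*k+1 → 2*k+1 ≤ j+p → s (k+R+1) = s k + 1 := by
      intro k h1 h2
      have := H' (2*k+1) h1 h2
      rw [show 2*k+1 + p = 2*(k+R+1) by omega, muSeq_odd, muSeq_even] at this
      exact this.symm
    have const : ∀ k, (j+1)/2 ≤ k → 2*k+1 ≤ j+p → s (k+R+1) = s (k+R) := by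
      intro k h1 h2
      rw [rel2 k (by omega) h2, rel1 k (by omega) (by omega), fin2_aa]
    have chain : ∀ d, d ≤ R → s ((j+1)/2 + R + d) = s ((j+1)/2 + R) := by
      intro d hd
      induction d with
      | zero => rfl
      | succ d ih =>
        have hc := const ((j+1)/2 + d) (by omega) (by omega)
        rw [show (j+1)/2 + R + (d+1) = (j+1)/2 + d + R + 1 by omega, hc,
          show (j+1)/2 + d + R = (j+1)/2 + R + d by omega, ih (by omega)]
    have final := rel1 ((j+1)/2 + R) (by omega) (by omega)
    rw [show (j+1)/2 + R + R = (j+1)/2 + R + R by rfl] at final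
    have hch := chain R le_rfl
    rw [show (j+1)/2 + R + R = (j+1)/2 + R + R by rfl] at hch
    rw [show ((j+1)/2 + R) + R = (j+1)/2 + R + R by omega, hch] at final
    exact fin2_ne _ final

/-- From a square at position 1 with odd period ≥ 5 in a mu-image, extract a
period-1 overlap in the preimage. -/
lemma sqpos1 {s : ℕ → Fin 2} {R : ℕ} (hR : 2 ≤ R)
    (H : ∀ x, 1 ≤ x → x ≤ 2*R+1 → muSeq s x = muSeq s (x + (2*R+1))) :
    Ov s (R+1) 1 := by
  have rel1 : ∀ k, 1 ≤ k → k ≤ R → s k = s (k+R) + 1 := by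
    intro k h1 h2
    have := H (2*k) (by omega) (by omega)
    rwa [show 2*k + (2*R+1) = 2*(k+R)+1 by omega, muSeq_even, muSeq_odd] at this
  have rel2 : ∀ k, k ≤ R → s (k+R+1) = s k + 1 := by
    intro k h2
    have := H (2*k+1) (by omega) (by omega)
    rw [show 2*k+1 + (2*R+1) = 2*(k+R+1) by omega, muSeq_odd, muSeq_even] at this
    exact this.symm
  have const : ∀ k, 1 ≤ k → k ≤ R → s (k+R+1) = s (k+R) := by
    intro k h1 h2
    rw [rel2 k h2, rel1 k h1 h2, fin2_aa]
  refine ⟨le_rfl, ?_⟩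
  intro i hi
  have hc := const (i+1) (by omega) (by omega)
  rw [show R+1+i = (i+1)+R by omega]
  exact hc.symm

lemma tm_even (k : ℕ) : thueMorse (2*k) = thueMorse k := by
  rcases Nat.eq_zero_or_pos k with rfl | hk
  · rfl
  · unfold thueMorse
    rw [Nat.digits_def' (by norm_num : 1 < 2) (by omega)]
    simp [Nat.mul_mod_right, Nat.mul_div_cancel_left]

lemma tm_odd (k : ℕ) : thueMorse (2*k+1) = thueMorse k + 1 := by
  unfold thueMorse
  rw [Nat.digits_def' (by norm_num : 1 < 2) (by omega)]
  have h1 : (2*k+1) % 2 = 1 := by omega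
  have h2 : (2*k+1) / 2 = k := by omega
  rw [h1, h2]
  push_cast [List.sum_cons]
  apply Fin.ext
  simp only [Fin.val_add, Fin.val_ofNat, Fin.val_one]
  omega

lemma tm_mu : muSeq thueMorse = thueMorse := by
  funext n
  rcases Nat.even_or_odd n with ⟨k, hk⟩ | ⟨k, hk⟩
  · rw [show n = 2*k by omega, muSeq_even, tm_even]
  · rw [hk, muSeq_odd, tm_odd]

lemma prepend_nil {α : Type*} (s : ℕ → α) : prependWord [] s = s := by
  funext n; simp [prependWord]

lemma prepend_zero {α : Type*} (a : α) (u : List α) (s : ℕ → α) :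
    prependWord (a :: u) s 0 = a := by
  simp [prependWord]

lemma prepend_succ {α : Type*} (a : α) (u : List α) (s : ℕ → α) (n : ℕ) :
    prependWord (a :: u) s (n+1) = prependWord u s n := by
  unfold prependWord
  by_cases h : n < u.length
  · rw [dif_pos (by simpa using Nat.succ_lt_succ h), dif_pos h]
    rfl
  · rw [dif_neg (show ¬ n+1 < (a::u).length by simp only [List.length_cons]; omega),
      dif_neg h]
    congr 1
    simp only [List.length_cons]
    omega

/-- The Thue-Morse morphism on finite words. -/
def muList : List (Fin 2) → List (Fin 2)
  | [] => []
  | a :: u => a :: (a+1) :: muList u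

lemma muSeq_prepend (u : List (Fin 2)) :
    muSeq (prependWord u thueMorse) = prependWord (muList u) thueMorse := by
  induction u with
  | nil => rw [prepend_nil, tm_mu, muList, prepend_nil]
  | cons a u ih =>
    funext n
    match n with
    | 0 =>
      rw [show (0:ℕ) = 2*0 by rfl, muSeq_even, prepend_zero, muList, prepend_zero]
    | 1 =>
      rw [show (1:ℕ) = 2*0+1 by rfl, muSeq_odd, prepend_zero, muList, prepend_succ,
        prepend_zero]
    | (m+2) =>
      have e1 : muSeq (prependWord (a :: u) thueMorse) (m+2)
          = muSeq (prependWord u thueMorse) m := by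
        rcases Nat.even_or_odd m with ⟨k, hk⟩ | ⟨k, hk⟩
        · rw [show m = 2*k by omega, show 2*k+2 = 2*(k+1) by omega, muSeq_even,
            muSeq_even, prepend_succ]
        · rw [hk, show 2*k+1+2 = 2*(k+1)+1 by omega, muSeq_odd, muSeq_odd, prepend_succ]
      rw [e1, ih, muList, prepend_succ, prepend_succ]

abbrev Pw (u : List (Fin 2)) : ℕ → Fin 2 := prependWord u thueMorse

def NoOv (s : ℕ → Fin 2) (p : ℕ) : Prop := ∀ j, ¬ Ov s j p

lemma tm_zero : thueMorse 0 = 0 := by simp [thueMorse]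

lemma ov_shift {s₁ s₂ : ℕ → Fin 2} (h : ∀ n, s₁ n = s₂ (n+1)) {j p : ℕ}
    (hov : Ov s₁ j p) : Ov s₂ (j+1) p := by
  obtain ⟨h1, H⟩ := hov
  refine ⟨h1, fun i hi => ?_⟩
  have := H i hi
  rw [h, h] at this
  rw [show j+1+i = j+i+1 by omega, show j+i+1+p = j+i+p+1 by omega]
  exact this

lemma noOv_muSeq {s : ℕ → Fin 2} {p : ℕ} (h : ∀ q, p = 2*q → NoOv s q) :
    NoOv (muSeq s) p := by
  intro j hov
  obtain ⟨q, hq, hov'⟩ := descent hov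
  exact h q hq _ hov'

lemma mk (u v : List (Fin 2)) (h : muList u = v) :
    muSeq (Pw u) = Pw v := by rw [muSeq_prepend, h]

lemma fam : ∀ p : ℕ,
    NoOv (Pw []) p ∧ NoOv (Pw [0]) p ∧ NoOv (Pw [1]) p ∧ NoOv (Pw [1,0]) p ∧
    NoOv (Pw [0,1]) p ∧ NoOv (Pw [0,0,1]) p ∧ NoOv (Pw [0,1,0,1,1,0]) p ∧
    NoOv (Pw [1,1,0,1,1,0]) p ∧ NoOv (Pw [1,0,1,0,0,1,1,0,1,0,0,1]) p := by
  intro p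
  induction p using Nat.strong_induction_on with
  | _ p ih =>
  rcases Nat.eq_zero_or_pos p with rfl | hp
  · have triv : ∀ s : ℕ → Fin 2, NoOv s 0 := fun s j hov => by
      have := hov.1; omega
    exact ⟨triv _, triv _, triv _, triv _, triv _, triv _, triv _, triv _, triv _⟩
  -- members that are mu-images
  have hT : NoOv (Pw []) p := by
    have h2 : NoOv (muSeq (Pw [])) p :=
      noOv_muSeq (fun q hq => (ih q (by omega)).1)
    rwa [mk [] [] (by decide)] at h2
  have h10 : NoOv (Pw [1,0]) p := by
    have h2 : NoOv (muSeq (Pw [1])) p :=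
      noOv_muSeq (fun q hq => (ih q (by omega)).2.2.1)
    rwa [mk [1] [1,0] (by decide)] at h2
  have h01 : NoOv (Pw [0,1]) p := by
    have h2 : NoOv (muSeq (Pw [0])) p :=
      noOv_muSeq (fun q hq => (ih q (by omega)).2.1)
    rwa [mk [0] [0,1] (by decide)] at h2
  have h1001 : NoOv (Pw [1,0,0,1]) p := by
    have h2 : NoOv (muSeq (Pw [1,0])) p :=
      noOv_muSeq (fun q hq => (ih q (by omega)).2.2.2.1)
    rwa [mk [1,0] [1,0,0,1] (by decide)] at h2
  have hS1 : NoOv (Pw [0,1,0,1,1,0]) p := by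
    have h2 : NoOv (muSeq (Pw [0,0,1])) p :=
      noOv_muSeq (fun q hq => (ih q (by omega)).2.2.2.2.2.1)
    rwa [mk [0,0,1] [0,1,0,1,1,0] (by decide)] at h2
  have hS2 : NoOv (Pw [1,0,1,0,0,1,1,0,1,0,0,1]) p := by
    have h2 : NoOv (muSeq (Pw [1,1,0,1,1,0])) p :=
      noOv_muSeq (fun q hq => (ih q (by omega)).2.2.2.2.2.2.2.1)
    rwa [mk [1,1,0,1,1,0] [1,0,1,0,0,1,1,0,1,0,0,1] (by decide)] at h2
  -- members that are shifts of mu-images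
  have h0 : NoOv (Pw [0]) p := fun j hov =>
    h10 (j+1) (ov_shift (fun n => (prepend_succ 1 [0] thueMorse n).symm) hov)
  have h1 : NoOv (Pw [1]) p := fun j hov =>
    h01 (j+1) (ov_shift (fun n => (prepend_succ 0 [1] thueMorse n).symm) hov)
  have hW2 : NoOv (Pw [0,0,1]) p := fun j hov =>
    h1001 (j+1) (ov_shift (fun n => (prepend_succ 1 [0,0,1] thueMorse n).symm) hov)
  -- the special member 110110·t
  have eW3S1 : ∀ n : ℕ, Pw [1,1,0,1,1,0] (n+1) = Pw [0,1,0,1,1,0] (n+1) := by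
    intro n
    show prependWord (1 :: [1,0,1,1,0]) thueMorse (n+1)
      = prependWord (0 :: [1,0,1,1,0]) thueMorse (n+1)
    rw [prepend_succ, prepend_succ]
  have eS1 : Pw [0,1,0,1,1,0] = muSeq (Pw [0,0,1]) :=
    (mk [0,0,1] [0,1,0,1,1,0] (by decide)).symm
  have conv : ∀ m : ℕ, 1 ≤ m → Pw [1,1,0,1,1,0] m = muSeq (Pw [0,0,1]) m := by
    intro m hm
    rw [show m = (m-1)+1 by omega, eW3S1, eS1]
  have hW3 : NoOv (Pw [1,1,0,1,1,0]) p := by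
    intro j hov
    rcases j with _ | j'
    · obtain ⟨h1', H⟩ := hov
      rcases Nat.even_or_odd p with ⟨q, hq⟩ | ⟨R, hR⟩
      · -- even period: contradiction from the pair property
        have e0 := H 0 (by omega)
        have e1 := H 1 (by omega)
        simp only [Nat.zero_add, Nat.add_zero] at e0 e1
        rw [conv p (by omega), show p = 2*q by omega, muSeq_even] at e0
        rw [conv (1+p) (by omega), show 1+p = 2*q+1 by omega, muSeq_odd] at e1
        have v0 : Pw [1,1,0,1,1,0] 0 = 1 := rfl
        have v1 : Pw [1,1,0,1,1,0] 1 = 1 := rfl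
        rw [v0] at e0
        rw [v1, ← e0] at e1
        exact absurd e1 (by decide)
      · rcases Nat.lt_or_ge R 2 with hR2 | hR2
        · interval_cases R
          · -- p = 1
            have h3 := H 1 (by omega)
            rw [hR] at h3
            have h3' : Pw [1,1,0,1,1,0] 1 = Pw [1,1,0,1,1,0] 2 := by
              simpa using h3
            exact absurd h3' (by decide)
          · -- p = 3
            have h3 := H 3 (by omega)
            rw [hR] at h3
            have h3' : Pw [1,1,0,1,1,0] 3 = Pw [1,1,0,1,1,0] 6 := by
              simpa using h3
            have e3 : Pw [1,1,0,1,1,0] 3 = 1 := rfl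
            have e6 : Pw [1,1,0,1,1,0] 6 = thueMorse 0 := rfl
            rw [e3, e6, tm_zero] at h3'
            exact absurd h3' (by decide)
        · have Hsq : ∀ x, 1 ≤ x → x ≤ 2*R+1 →
              muSeq (Pw [0,0,1]) x = muSeq (Pw [0,0,1]) (x + (2*R+1)) := by
            intro x hx1 hx2
            have hh := H x (by omega)
            simp only [Nat.zero_add] at hh
            rw [conv x hx1, conv (x+p) (by omega), hR] at hh
            exact hh
          exact (ih 1 (by omega)).2.2.2.2.2.1 (R+1) (sqpos1 hR2 Hsq)
    · apply hS1 (j'+1)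
      obtain ⟨h1', H⟩ := hov
      refine ⟨h1', fun i hi => ?_⟩
      have hh := H i hi
      rw [show j'+1+i = (j'+i)+1 by omega, show (j'+i)+1+p = (j'+i+p)+1 by omega] at hh ⊢
      rw [← eW3S1, ← eW3S1]
      exact hh
  exact ⟨hT, h0, h1, h10, h01, hW2, hS1, hW3, hS2⟩

lemma bridge {s : ℕ → Fin 2} (hs : ∀ p, NoOv s p) (n : ℕ) :
    OverlapFree (wordPrefix s n) := by
  rintro ⟨u, hinf, x, Y, hu⟩
  obtain ⟨l, r, hlr⟩ := hinf
  have hu' : u = (x :: Y) ++ ((x :: Y) ++ [x]) := by rw [hu]; simp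
  set v : List (Fin 2) := x :: Y with hv
  set p := Y.length + 1 with hp
  have hvl : v.length = p := by simp [hv, hp]
  have hul : u.length = 2*p + 1 := by rw [hu']; simp [hvl]; omega
  have hn : l.length + u.length + r.length = n := by
    have := congrArg List.length hlr
    simp only [List.length_append, wordPrefix, List.length_map, List.length_range] at this
    omega
  have idx : ∀ k, k < u.length → s (l.length + k) = u.getD k 0 := by
    intro k hk
    have h1 : l.length + k < n := by omega
    have e1 : (wordPrefix s n).getD (l.length + k) 0 = s (l.length + k) := by
      have hlen : l.length + k < (wordPrefix s n).length := by
        simp only [wordPrefix, List.length_map, List.length_range]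
        omega
      rw [List.getD_eq_getElem _ _ hlen]
      simp [wordPrefix]
    rw [← e1, ← hlr]
    rw [List.getD_append (l++u) r 0 (l.length+k) (by simp only [List.length_append]; omega)]
    rw [List.getD_append_right l u 0 (l.length+k) (by omega)]
    congr 1
    omega
  apply hs p l.length
  refine ⟨by omega, fun i hi => ?_⟩
  rw [idx i (by omega), show l.length + i + p = l.length + (i+p) by omega,
    idx (i+p) (by omega)]
  rcases Nat.lt_or_ge i p with hip | hip
  · rw [hu']
    rw [List.getD_append v (v ++ [x]) 0 i (by omega)]
    rw [List.getD_append_right v (v ++ [x]) 0 (i+p) (by omega)]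
    rw [List.getD_append v [x] 0 (i+p-v.length) (by omega)]
    congr 1
    omega
  · have hip' : i = p := by omega
    subst hip'
    rw [hu']
    rw [List.getD_append_right v (v ++ [x]) 0 p (by omega)]
    rw [List.getD_append_right v (v ++ [x]) 0 (p+p) (by omega)]
    rw [show p - v.length = 0 by omega]
    rw [show p + p - v.length = p by omega]
    rw [List.getD_append v [x] 0 0 (by omega)]
    rw [List.getD_append_right v [x] 0 p (by omega)]
    rw [show p - v.length = 0 by omega]
    simp [hv]

theorem prefixes_of_prepended_thueMorse_overlapFree (n : ℕ) :
    OverlapFree (wordPrefix (prependWord [0,1,0,1,1,0] thueMorse) n) ∧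
    OverlapFree (wordPrefix (prependWord [1,0,1,0,0,1,1,0,1,0,0,1] thueMorse) n) := by
  constructor
  · exact bridge (fun p => (fam p).2.2.2.2.2.2.1) n
  · exact bridge (fun p => (fam p).2.2.2.2.2.2.2.2) n
end

section
/- Every finite prefix of the infinite word 2·v is squarefree, where v is the ternary Thue–Morse word. -/
/-- A square is a word of the form XX with X nonempty. -/
def IsSquare' {α : Type*} (w : List α) : Prop :=
  ∃ X : List α, X ≠ [] ∧ w = X ++ X

/-- A word contains a square if some factor (contiguous subword) of it is a square. -/
def HasSquare {α : Type*} (w : List α) : Prop :=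
  ∃ u, u <:+: w ∧ IsSquare' u

/-- A word is squarefree if none of its factors is a square. -/
def SquareFree' {α : Type*} (w : List α) : Prop := ¬ HasSquare w

/-- Apply the morphism determined by letter images `h` to a word. -/
def applyMorphism {α : Type*} (h : α → List α) (w : List α) : List α := w.flatMap h

/-- The ternary morphism τ with τ(0)=012, τ(1)=02, τ(2)=1. -/
def tau : Fin 3 → List (Fin 3) := fun a =>
  if a = 0 then [0,1,2] else if a = 1 then [0,2] else [1]

/-- The k-th iterate of τ applied to the word 0; these are prefixes of the ternary
Thue–Morse word v = τ^ω(0), and every finite prefix of v is a prefix of some iterate. -/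
def tauIter (k : ℕ) : List (Fin 3) := (applyMorphism tau)^[k] [0]

/-- Thue–Morse sequence. -/
def tmSeq (n : ℕ) : Bool := decide ((Nat.digits 2 n).sum % 2 = 1)

lemma tm_zero_s13 : tmSeq 0 = false := by simp [tmSeq]

lemma tm_even_s13 (n : ℕ) : tmSeq (2*n) = tmSeq n := by
  rcases Nat.eq_zero_or_pos n with h | h
  · simp [h]
  · unfold tmSeq
    rw [Nat.digits_def' (by norm_num : (1:ℕ) < 2) (by omega : 0 < 2*n)]
    have h1 : (2*n) % 2 = 0 := by omega
    have h2 : (2*n) / 2 = n := by omega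
    rw [h1, h2]
    simp

lemma tm_odd_s13 (n : ℕ) : tmSeq (2*n+1) = !tmSeq n := by
  unfold tmSeq
  rw [Nat.digits_def' (by norm_num : (1:ℕ) < 2) (by omega : 0 < 2*n+1)]
  have h1 : (2*n+1) % 2 = 1 := by omega
  have h2 : (2*n+1) / 2 = n := by omega
  rw [h1, h2]
  rcases Nat.mod_two_eq_zero_or_one ((Nat.digits 2 n).sum) with h | h <;>
    simp [List.sum_cons, Nat.add_mod, h]

lemma no_three (n : ℕ) : ¬ (tmSeq n = tmSeq (n+1) ∧ tmSeq (n+1) = tmSeq (n+2)) := by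
  rintro ⟨h1, h2⟩
  rcases Nat.even_or_odd n with ⟨a, ha⟩ | ⟨a, ha⟩
  · have e1 : n = 2*a := by omega
    rw [e1, tm_even_s13, tm_odd_s13] at h1
    cases tmSeq a <;> simp_all
  · have e1 : n+1 = 2*(a+1) := by omega
    have e2 : n+2 = 2*(a+1)+1 := by omega
    rw [e2, e1, tm_even_s13, tm_odd_s13] at h2
    cases tmSeq (a+1) <;> simp_all

lemma chain_eq (g : ℕ → Bool) (a : ℕ) :
    ∀ k, (∀ j, j < k → g (a+j) = g (a+j+1)) → g a = g (a+k) := by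
  intro k
  induction k with
  | zero => intro _; rfl
  | succ k IH =>
    intro h
    have h1 := IH (fun j hj => h j (by omega))
    have h2 := h k (by omega)
    rw [show a + (k+1) = a + k + 1 by omega, ← h2, h1]

lemma no_overlap : ∀ L, 1 ≤ L → ∀ i, ¬ (∀ j, j ≤ L → tmSeq (i+j) = tmSeq (i+L+j)) := by
  intro L
  induction L using Nat.strong_induction_on with
  | _ L IH =>
    intro hL i H
    rcases Nat.even_or_odd L with ⟨M, hM⟩ | ⟨M, hM⟩
    · -- L = 2M
      have hM1 : 1 ≤ M := by omega
      refine IH M (by omega) hM1 (i/2) ?_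
      intro j hj
      set r := i/2 + j with hr
      rw [show i/2 + M + j = r + M by omega]
      by_cases hc : i ≤ 2*r
      · have h1 := H (2*r - i) (by omega)
        rw [show i + (2*r - i) = 2*r by omega,
            show i + L + (2*r - i) = 2*(r + M) by omega, tm_even_s13, tm_even_s13] at h1
        exact h1
      · have h1 := H (2*r + 1 - i) (by omega)
        rw [show i + (2*r+1 - i) = 2*r+1 by omega,
            show i + L + (2*r+1 - i) = 2*(r + M)+1 by omega, tm_odd_s13, tm_odd_s13] at h1
        simpa using h1
    · -- L = 2M+1
      rcases Nat.eq_zero_or_pos M with hM0 | hM1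
      · -- L = 1
        have h0 := H 0 (by omega)
        have h1 := H 1 (by omega)
        rw [show i + 0 = i by omega, show i + L + 0 = i + 1 by omega] at h0
        rw [show i + L + 1 = i + 2 by omega] at h1
        exact no_three i ⟨h0, h1⟩
      · have hr : ∀ r, i ≤ 2*r → 2*r+1 ≤ i + L → tmSeq (r+M) = tmSeq (r+M+1) := by
          intro r h1 h2
          have e1 := H (2*r - i) (by omega)
          rw [show i + (2*r - i) = 2*r by omega,
              show i + L + (2*r - i) = 2*(r+M)+1 by omega, tm_even_s13, tm_odd_s13] at e1
          have e2 := H (2*r + 1 - i) (by omega)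
          rw [show i + (2*r+1 - i) = 2*r+1 by omega,
              show i + L + (2*r+1 - i) = 2*(r+M+1) by omega, tm_odd_s13, tm_even_s13] at e2
          rw [← e2, e1, Bool.not_not]
        by_cases hgen : i % 2 = 0 ∨ 2 ≤ M
        · set r := (i+1)/2 with hrdef
          have c1 := hr r (by omega) (by omega)
          have c2 := hr (r+1) (by omega) (by omega)
          refine no_three (r + M) ⟨c1, ?_⟩
          rw [show r+M+1 = r+1+M by omega, show r+M+2 = r+1+M+1 by omega]
          exact c2
        · -- i odd, M = 1, L = 3
          obtain ⟨a, ha⟩ : ∃ a, i = 2*a+1 := ⟨i/2, by omega⟩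
          have hL3 : L = 3 := by omega
          have h0 := H 0 (by omega)
          have h1 := H 1 (by omega)
          have h2 := H 2 (by omega)
          have h3 := H 3 (by omega)
          rw [show i + 0 = 2*a+1 by omega, show i + L + 0 = 2*(a+2) by omega,
              tm_odd_s13, tm_even_s13] at h0
          rw [show i + 1 = 2*(a+1) by omega, show i + L + 1 = 2*(a+2)+1 by omega,
              tm_even_s13, tm_odd_s13] at h1
          rw [show i + 2 = 2*(a+1)+1 by omega, show i + L + 2 = 2*(a+3) by omega,
              tm_odd_s13, tm_even_s13] at h2
          rw [show i + 3 = 2*(a+2) by omega, show i + L + 3 = 2*(a+3)+1 by omega,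
              tm_even_s13, tm_odd_s13] at h3
          cases tmSeq a <;> cases tmSeq (a+1) <;> cases tmSeq (a+2) <;>
            cases tmSeq (a+3) <;> simp_all

lemma no_sq_prefix : ∀ L, 1 ≤ L → ¬ (∀ m, m < L → tmSeq m = tmSeq (m+L)) := by
  intro L
  induction L using Nat.strong_induction_on with
  | _ L IH =>
    intro hL H
    rcases Nat.even_or_odd L with ⟨M, hM⟩ | ⟨M, hM⟩
    · -- L = 2M
      have hM1 : 1 ≤ M := by omega
      refine IH M (by omega) hM1 ?_
      intro m hm
      have h1 := H (2*m) (by omega)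
      rw [show 2*m + L = 2*(m+M) by omega, tm_even_s13, tm_even_s13] at h1
      exact h1
    · -- L = 2M+1
      rcases Nat.eq_zero_or_pos M with hM0 | hM1
      · have h0 := H 0 (by omega)
        rw [show (0:ℕ) + L = 2*0+1 by omega, tm_odd_s13] at h0
        rw [show (0:ℕ) = 2*0 by omega, tm_even_s13] at h0
        exact absurd h0 (by simp)
      · -- relations
        have heven : ∀ r, r ≤ M → tmSeq r = !tmSeq (r+M) := by
          intro r h
          have h1 := H (2*r) (by omega)
          rw [show 2*r + L = 2*(r+M)+1 by omega, tm_even_s13, tm_odd_s13] at h1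
          exact h1
        have hodd : ∀ r, r < M → (!tmSeq r) = tmSeq (r+M+1) := by
          intro r h
          have h1 := H (2*r+1) (by omega)
          rw [show 2*r+1 + L = 2*(r+M+1) by omega, tm_odd_s13, tm_even_s13] at h1
          exact h1
        have hchain : tmSeq M = tmSeq (M + M) := by
          refine chain_eq tmSeq M M ?_
          intro j hj
          have e1 := heven j (by omega)
          have e2 := hodd j hj
          rw [show M + j = j + M by omega, show j + M + 1 = j + (M+1) by omega]
          rw [show j + (M+1) = j + M + 1 by omega, ← e2, e1, Bool.not_not]
        have hlast := heven M (by omega)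
        rw [← hchain] at hlast
        exact absurd hlast (by simp)

/-- The pair-coding map: v_n = fPair (t_n) (t_{n+1}). -/
def fPair : Bool → Bool → Fin 3
  | false, true => 0
  | false, false => 1
  | true, true => 1
  | true, false => 2

lemma fPair_eq_of_eq {a b c d : Bool} (h : fPair a b = fPair c d) (hac : a = c) : b = d := by
  cases a <;> cases b <;> cases c <;> cases d <;> simp_all <;> exact absurd h (by decide)

lemma fPair_eq_of_ne {a b c d : Bool} (h : fPair a b = fPair c d) (hac : a ≠ c) :
    a = b ∧ c = d := by
  cases a <;> cases b <;> cases c <;> cases d <;> simp_all <;> exact absurd h (by decide)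

/-- t extended on the left by one `true`. -/
def Tm : ℕ → Bool
  | 0 => true
  | (n+1) => tmSeq n

/-- The key word: letters fPair (Tm i) (Tm (i+1)). -/
def Fw (i : ℕ) : Fin 3 := fPair (Tm i) (Tm (i+1))

lemma key_no_square (i L : ℕ) (hL : 1 ≤ L)
    (H : ∀ j, j < L → Fw (i+j) = Fw (i+L+j)) : False := by
  by_cases hT : Tm i = Tm (i+L)
  · -- propagate equality
    have claim : ∀ j, j ≤ L → Tm (i+j) = Tm (i+L+j) := by
      intro j
      induction j with
      | zero => intro _; simpa using hT
      | succ j IHj =>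
        intro hj
        have e := H j (by omega)
        have := fPair_eq_of_eq e (IHj (by omega))
        rw [show i+(j+1) = i+j+1 by omega, show i+L+(j+1) = i+L+j+1 by omega]
        exact this
    rcases Nat.eq_zero_or_pos i with hi0 | hip
    · subst hi0
      refine no_sq_prefix L hL ?_
      intro m hm
      have := claim (m+1) (by omega)
      rw [show 0+(m+1) = m+1 by omega, show 0+L+(m+1) = (m+L)+1 by omega] at this
      exact this
    · obtain ⟨a, rfl⟩ : ∃ a, i = a+1 := ⟨i-1, by omega⟩
      refine no_overlap L hL a ?_
      intro j hj
      have := claim j hj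
      rw [show a+1+j = (a+j)+1 by omega, show a+1+L+j = (a+L+j)+1 by omega] at this
      exact this
  · -- propagate inequality; get constant chain
    have claim2 : ∀ j, j ≤ L → Tm (i+j) ≠ Tm (i+L+j) ∧ (j < L → Tm (i+j) = Tm (i+j+1)) := by
      intro j
      induction j with
      | zero =>
        intro _
        refine ⟨by simpa using hT, ?_⟩
        intro hj
        have e := H 0 hj
        have := fPair_eq_of_ne (by simpa [Fw] using e) (by simpa using hT)
        simpa using this.1
      | succ j IHj =>
        intro hj
        have prev := IHj (by omega)
        have e := H j (by omega)
        have hne := prev.1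
        have := fPair_eq_of_ne e hne
        have hne' : Tm (i+j+1) ≠ Tm (i+L+j+1) := by
          rw [← this.1, ← this.2]; exact hne
        constructor
        · rw [show i+(j+1) = i+j+1 by omega, show i+L+(j+1) = i+L+j+1 by omega]
          exact hne'
        · intro hj'
          have e' := H (j+1) hj'
          rw [show i+(j+1) = i+j+1 by omega, show i+L+(j+1) = i+L+j+1 by omega] at e'
          have h2 := fPair_eq_of_ne e' hne'
          exact h2.1
    have hchain : Tm i = Tm (i+L) := by
      refine chain_eq Tm i L ?_
      intro j hj
      exact (claim2 j (by omega)).2 hj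
    exact hT hchain

lemma key_word_squarefree (N : ℕ) : ¬ HasSquare ((List.range N).map Fw) := by
  rintro ⟨u, ⟨s, e, hw⟩, X, hX, rfl⟩
  set i := s.length with hi
  set L := X.length with hLdef
  have hL : 1 ≤ L := by
    cases X with
    | nil => exact absurd rfl hX
    | cons a l => simp [hLdef]
  have hlen : i + (L + L) + e.length = N := by
    have := congrArg List.length hw
    simp [hi, hLdef] at this
    omega
  refine key_no_square i L hL ?_
  intro j hj
  have hw' : s ++ (X ++ (X ++ e)) = (List.range N).map Fw := by
    rw [← hw]; simp [List.append_assoc]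
  have get1 : ((List.range N).map Fw)[i+j]? = X[j]? := by
    rw [← hw']
    rw [List.getElem?_append_right (by omega)]
    rw [show i + j - s.length = j by omega]
    rw [List.getElem?_append_left (by omega)]
  have get2 : ((List.range N).map Fw)[i+L+j]? = X[j]? := by
    rw [← hw']
    rw [List.getElem?_append_right (by omega)]
    rw [show i + L + j - s.length = L + j by omega]
    rw [List.getElem?_append_right (by omega)]
    rw [show L + j - X.length = j by omega]
    rw [List.getElem?_append_left (by omega)]
  have gmap : ∀ m, m < N → ((List.range N).map Fw)[m]? = some (Fw m) := by
    intro m hm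
    rw [List.getElem?_map, List.getElem?_range hm]
    rfl
  have e1 := gmap (i+j) (by omega)
  have e2 := gmap (i+L+j) (by omega)
  rw [get1] at e1
  rw [get2] at e2
  rw [e1] at e2
  exact Option.some.inj e2

def muW : List Bool → List Bool
  | [] => []
  | (x :: r) => x :: (!x) :: muW r

def PhiW : List Bool → List (Fin 3)
  | [] => []
  | [_] => []
  | (x :: y :: r) => fPair x y :: PhiW (y :: r)

def Sx : Bool → List (Fin 3) | false => [] | true => [2]
def Px : Bool → List (Fin 3) | false => [0] | true => []

lemma lemA : ∀ (b : List Bool) (x : Bool), ∃ z,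
    PhiW (muW (x :: b)) = Sx x ++ (PhiW (x :: b)).flatMap tau ++ Px z := by
  intro b
  induction b with
  | nil => intro x; exact ⟨x, by cases x <;> rfl⟩
  | cons y b' IH =>
    intro x
    obtain ⟨z, hz⟩ := IH y
    refine ⟨z, ?_⟩
    have h1 : PhiW (muW (x :: y :: b')) =
        fPair x (!x) :: fPair (!x) y :: PhiW (muW (y :: b')) := rfl
    have h2 : (PhiW (x :: y :: b')).flatMap tau =
        tau (fPair x y) ++ (PhiW (y :: b')).flatMap tau := rfl
    rw [h1, hz, h2]
    cases x <;> cases y <;> simp [Sx, Px, fPair, tau]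

def tmPref (n : ℕ) : List Bool := (List.range n).map tmSeq

lemma muW_append : ∀ a b : List Bool, muW (a ++ b) = muW a ++ muW b := by
  intro a b
  induction a with
  | nil => rfl
  | cons x r IH => simp [muW, IH]

lemma muW_tmPref (n : ℕ) : muW (tmPref n) = tmPref (2*n) := by
  induction n with
  | zero => rfl
  | succ n IH =>
    simp only [tmPref] at IH ⊢
    rw [List.range_succ, List.map_append, muW_append, IH]
    rw [show 2*(n+1) = (2*n+1)+1 by omega, List.range_succ, List.map_append,
        List.range_succ, List.map_append]
    simp [muW, tm_even_s13, tm_odd_s13]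

lemma phi_map : ∀ (m : ℕ) (u : ℕ → Bool), PhiW ((List.range (m+1)).map u)
    = (List.range m).map (fun i => fPair (u i) (u (i+1))) := by
  intro m
  induction m with
  | zero => intro u; rfl
  | succ m IH =>
    intro u
    have h1 : (List.range (m+1+1)).map u
        = u 0 :: ((List.range (m+1)).map (fun i => u (i+1))) := by
      rw [List.range_succ_eq_map]
      simp [Function.comp]
    have h2 : (List.range (m+1)).map (fun i => u (i+1))
        = u 1 :: ((List.range m).map (fun i => u (i+2))) := by
      rw [List.range_succ_eq_map]
      simp [Function.comp]
    rw [h1, h2]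
    have h3 : PhiW (u 0 :: u 1 :: ((List.range m).map (fun i => u (i+2))))
        = fPair (u 0) (u 1) :: PhiW (u 1 :: ((List.range m).map (fun i => u (i+2)))) := rfl
    rw [h3, ← h2, IH (fun i => u (i+1))]
    rw [List.range_succ_eq_map]
    simp [Function.comp]

lemma flatMap_prefix {α : Type*} (h : α → List α) {u v : List α} (huv : u <+: v) :
    u.flatMap h <+: v.flatMap h := by
  obtain ⟨w, rfl⟩ := huv
  exact ⟨w.flatMap h, (List.flatMap_append).symm⟩

lemma tmPref_cons (m : ℕ) : ∃ b, tmPref (m+1) = false :: b := by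
  refine ⟨(List.range m).map (fun i => tmSeq (i+1)), ?_⟩
  rw [tmPref, List.range_succ_eq_map]
  simp [Function.comp, tm_zero_s13]

lemma doubling (m : ℕ) :
    (PhiW (tmPref (m+1))).flatMap tau <+: PhiW (tmPref (2*(m+1))) := by
  obtain ⟨b, hb⟩ := tmPref_cons m
  obtain ⟨z, hz⟩ := lemA b false
  rw [← hb] at hz
  rw [← muW_tmPref, hz, hb]
  exact ⟨Px z, by simp [Sx]⟩

lemma tauIter_prefix : ∀ k, ∃ m, tauIter k <+: PhiW (tmPref (m+1)) := by
  intro k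
  induction k with
  | zero =>
    refine ⟨1, ?_⟩
    have h1 : tmSeq 1 = true := by
      have := tm_odd_s13 0
      simpa [tm_zero_s13] using this
    have h2 : tmPref 2 = [false, true] := by
      simp [tmPref, List.range_succ, tm_zero_s13, h1]
    rw [h2, show tauIter 0 = [0] from rfl]
    exact ⟨[], by rfl⟩
  | succ k IH =>
    obtain ⟨m, hm⟩ := IH
    refine ⟨2*m+1, ?_⟩
    have h1 : tauIter (k+1) = (tauIter k).flatMap tau := by
      rw [tauIter, Function.iterate_succ_apply']
      rfl
    rw [h1, show 2*m+1+1 = 2*(m+1) by omega]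
    exact (flatMap_prefix tau hm).trans (doubling m)

lemma two_phi_squarefree (m : ℕ) : SquareFree' (2 :: PhiW (tmPref (m+1))) := by
  have h1 : (2 : Fin 3) :: PhiW (tmPref (m+1)) = (List.range (m+1)).map Fw := by
    rw [tmPref, phi_map m tmSeq, List.range_succ_eq_map]
    simp only [List.map_cons, List.map_map]
    congr 1
  rw [h1]
  exact key_word_squarefree (m+1)

lemma squarefree_of_prefix {α : Type*} {p w : List α} (hw : SquareFree' w)
    (hp : p <+: w) : SquareFree' p := by
  rintro ⟨u, hu, hsq⟩
  exact hw ⟨u, hu.trans hp.isInfix, hsq⟩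

theorem prefixes_of_two_v_squarefree (k : ℕ) (p : List (Fin 3))
    (hp : p <+: (2 :: tauIter k)) : SquareFree' p := by
  obtain ⟨m, hm⟩ := tauIter_prefix k
  have h2 : (2 : Fin 3) :: tauIter k <+: 2 :: PhiW (tmPref (m+1)) := by
    rw [List.cons_prefix_cons]
    exact ⟨rfl, hm⟩
  exact squarefree_of_prefix (squarefree_of_prefix (two_phi_squarefree m) h2) hp
end
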